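/- The function t ↦ (2^{a/t} - 1)(2^{b/t} - 1)·2^{c/t}·t is convex on (0,∞) for all a, b, c ≥ 0, being the perspective of the convex function x ↦ (2^{ax}-1)(2^{bx}-1)2^{cx}. -/

import Mathlib

open Set Real

private lemma conv_two_rpow (k : ℝ) :
    ConvexOn ℝ (Set.Ioi (0 : ℝ)) (fun x => (2 : ℝ) ^ (k * x)) := by
  refine ⟨convex_Ioi 0, fun x _ y _ p q hp hq hpq => ?_⟩
  simp only [smul_eq_mul]
  have h := convexOn_exp.2 (Set.mem_univ (Real.log 2 * (k * x)))
    (Set.mem_univ (Real.log 2 * (k * y))) hp hq hpq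
  simp only [smul_eq_mul] at h
  rw [Real.rpow_def_of_pos two_pos, Real.rpow_def_of_pos two_pos,
    Real.rpow_def_of_pos two_pos]
  have e : Real.log 2 * (k * (p * x + q * y))
      = p * (Real.log 2 * (k * x)) + q * (Real.log 2 * (k * y)) := by ring
  rw [e]; exact h

private lemma mono_two_rpow {k : ℝ} (hk : 0 ≤ k) :
    MonotoneOn (fun x => (2 : ℝ) ^ (k * x)) (Set.Ioi (0 : ℝ)) := by
  intro x _ y _ hxy
  exact Real.rpow_le_rpow_of_exponent_le one_le_two (by nlinarith)

private lemma one_le_two_rpow {k x : ℝ} (hk : 0 ≤ k) (hx : 0 < x) :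
    (1 : ℝ) ≤ (2 : ℝ) ^ (k * x) := by
  have := Real.rpow_le_rpow_of_exponent_le (one_le_two (α := ℝ))
    (mul_nonneg hk hx.le)
  simpa using this

private lemma conv_factor {k : ℝ} :
    ConvexOn ℝ (Set.Ioi (0 : ℝ)) (fun x => (2 : ℝ) ^ (k * x) - 1) := by
  exact (conv_two_rpow k).sub (concaveOn_const 1 (convex_Ioi 0))

private lemma mono_factor {k : ℝ} (hk : 0 ≤ k) :
    MonotoneOn (fun x => (2 : ℝ) ^ (k * x) - 1) (Set.Ioi (0 : ℝ)) :=
  fun x hx y hy hxy => by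
    have := mono_two_rpow hk hx hy hxy; simpa using this

private lemma f_convex (a b c : ℝ) (ha : 0 ≤ a) (hb : 0 ≤ b) (hc : 0 ≤ c) :
    ConvexOn ℝ (Set.Ioi (0 : ℝ))
      (fun x => ((2 : ℝ) ^ (a * x) - 1) * ((2 : ℝ) ^ (b * x) - 1) * (2 : ℝ) ^ (c * x)) := by
  have h1 : ∀ ⦃x : ℝ⦄, x ∈ Set.Ioi (0 : ℝ) → 0 ≤ (2 : ℝ) ^ (a * x) - 1 :=
    fun x hx => by have := one_le_two_rpow ha (Set.mem_Ioi.1 hx); linarith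
  have h2 : ∀ ⦃x : ℝ⦄, x ∈ Set.Ioi (0 : ℝ) → 0 ≤ (2 : ℝ) ^ (b * x) - 1 :=
    fun x hx => by have := one_le_two_rpow hb (Set.mem_Ioi.1 hx); linarith
  have h3 : ∀ ⦃x : ℝ⦄, x ∈ Set.Ioi (0 : ℝ) → 0 ≤ (2 : ℝ) ^ (c * x) :=
    fun x hx => (Real.rpow_pos_of_pos two_pos _).le
  have hAB : ConvexOn ℝ (Set.Ioi (0 : ℝ))
      ((fun x => (2 : ℝ) ^ (a * x) - 1) * (fun x => (2 : ℝ) ^ (b * x) - 1)) :=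
    (conv_factor).mul conv_factor h1 h2 ((mono_factor ha).monovaryOn (mono_factor hb))
  have hABmono : MonotoneOn
      ((fun x => (2 : ℝ) ^ (a * x) - 1) * (fun x => (2 : ℝ) ^ (b * x) - 1))
      (Set.Ioi (0 : ℝ)) := by
    intro x hx y hy hxy
    simp only [Pi.mul_apply]
    exact mul_le_mul (mono_factor ha hx hy hxy) (mono_factor hb hx hy hxy) (h2 hx)
      (h1 hy)
  have hABnn : ∀ ⦃x : ℝ⦄, x ∈ Set.Ioi (0 : ℝ) →
      0 ≤ ((fun x => (2 : ℝ) ^ (a * x) - 1) * (fun x => (2 : ℝ) ^ (b * x) - 1)) x :=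
    fun x hx => mul_nonneg (h1 hx) (h2 hx)
  have := hAB.mul (conv_two_rpow c) hABnn h3 (hABmono.monovaryOn (mono_two_rpow hc))
  exact this

private lemma perspective {f : ℝ → ℝ} (hf : ConvexOn ℝ (Set.Ioi (0 : ℝ)) f) :
    ConvexOn ℝ (Set.Ioi (0 : ℝ)) (fun t => t * f (1 / t)) := by
  refine ⟨convex_Ioi 0, fun x hx y hy p q hp hq hpq => ?_⟩
  have hx' : (0 : ℝ) < x := hx
  have hy' : (0 : ℝ) < y := hy
  simp only [smul_eq_mul]
  have hz : 0 < p * x + q * y := by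
    rcases hp.lt_or_eq with h | h
    · have h1 := mul_pos h hx'
      have h2 := mul_nonneg hq hy'.le
      linarith
    · have hq1 : q = 1 := by linarith
      rw [← h, hq1]; simpa using hy'
  have hc1 : 0 ≤ p * x / (p * x + q * y) := by positivity
  have hc2 : 0 ≤ q * y / (p * x + q * y) := by positivity
  have hsum : p * x / (p * x + q * y) + q * y / (p * x + q * y) = 1 := by
    field_simp
  have key := hf.2 (Set.mem_Ioi.2 (one_div_pos.2 hx')) (Set.mem_Ioi.2 (one_div_pos.2 hy'))
    hc1 hc2 hsum
  simp only [smul_eq_mul] at key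
  have harg : p * x / (p * x + q * y) * (1 / x) + q * y / (p * x + q * y) * (1 / y)
      = 1 / (p * x + q * y) := by
    have hq' : q = 1 - p := by linarith
    subst hq'
    field_simp
    ring
  rw [harg] at key
  have := mul_le_mul_of_nonneg_left key hz.le
  calc (p * x + q * y) * f (1 / (p * x + q * y))
      ≤ (p * x + q * y) * (p * x / (p * x + q * y) * f (1 / x)
          + q * y / (p * x + q * y) * f (1 / y)) := this
    _ = p * (x * f (1 / x)) + q * (y * f (1 / y)) := by
        field_simp

theorem stmt_4 (a b c : ℝ) (ha : 0 ≤ a) (hb : 0 ≤ b) (hc : 0 ≤ c) :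
    ConvexOn ℝ (Set.Ioi (0 : ℝ))
      (fun t => t * ((2 : ℝ) ^ (a / t) - 1) * ((2 : ℝ) ^ (b / t) - 1) * (2 : ℝ) ^ (c / t)) := by
  have h := perspective (f_convex a b c ha hb hc)
  have e : (fun t => t * ((2 : ℝ) ^ (a / t) - 1) * ((2 : ℝ) ^ (b / t) - 1)
        * (2 : ℝ) ^ (c / t))
      = fun t => t * (((2 : ℝ) ^ (a * (1 / t)) - 1) * ((2 : ℝ) ^ (b * (1 / t)) - 1)
        * (2 : ℝ) ^ (c * (1 / t))) := by
    funext t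
    rw [mul_one_div, mul_one_div, mul_one_div]
    ring
  rw [e]
  exact h
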